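/- For every symmetric polynomial f ∈ ℂ[X_1,…,X_n]^{S_n}, the element f(x_1,…,x_n) is central in H, and likewise the element f(y_1,…,y_n) is central in H. -/

import Mathlib

noncomputable section

/-- Generators of the rational Cherednik algebra of `S_n` at `t = 0`. -/
inductive CherGen (n : ℕ) : Type
  | x : Fin n → CherGen n
  | y : Fin n → CherGen n
  | T : Equiv.Perm (Fin n) → CherGen n

namespace Cherednik

variable (n : ℕ)

/-- The free algebra on the generators. -/
abbrev F := FreeAlgebra ℂ (CherGen n)

def fx (i : Fin n) : F n := FreeAlgebra.ι ℂ (CherGen.x i)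
def fy (i : Fin n) : F n := FreeAlgebra.ι ℂ (CherGen.y i)
def fT (w : Equiv.Perm (Fin n)) : F n := FreeAlgebra.ι ℂ (CherGen.T w)

/-- `s_{ij}`, the transposition interchanging `i` and `j`. -/
def fs (i j : Fin n) : F n := fT n (Equiv.swap i j)

/-- The defining relations of the rational Cherednik algebra at `t = 0`. -/
inductive Rel : F n → F n → Prop
  | T_mul (u v : Equiv.Perm (Fin n)) : Rel (fT n u * fT n v) (fT n (u * v))
  | T_one : Rel (fT n 1) 1
  | x_comm (i j : Fin n) : Rel (fx n i * fx n j) (fx n j * fx n i)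
  | y_comm (i j : Fin n) : Rel (fy n i * fy n j) (fy n j * fy n i)
  | w_x (w : Equiv.Perm (Fin n)) (i : Fin n) :
      Rel (fT n w * fx n i) (fx n (w i) * fT n w)
  | w_y (w : Equiv.Perm (Fin n)) (i : Fin n) :
      Rel (fT n w * fy n i) (fy n (w i) * fT n w)
  | yx_same (i : Fin n) :
      Rel (fy n i * fx n i)
        (fx n i * fy n i - ∑ j ∈ Finset.univ.filter (fun j => j ≠ i), fs n i j)
  | yx_ne (i j : Fin n) (h : i ≠ j) :
      Rel (fy n i * fx n j) (fx n j * fy n i + fs n i j)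

/-- The rational Cherednik algebra `H` of `S_n` at `t = 0`. -/
abbrev H := RingQuot (Rel n)

def hx (i : Fin n) : H n := RingQuot.mkAlgHom ℂ (Rel n) (fx n i)
def hy (i : Fin n) : H n := RingQuot.mkAlgHom ℂ (Rel n) (fy n i)
def hT (w : Equiv.Perm (Fin n)) : H n := RingQuot.mkAlgHom ℂ (Rel n) (fT n w)
def hs (i j : Fin n) : H n := hT n (Equiv.swap i j)

end Cherednik

namespace Cherednik

/-- Evaluation of a polynomial `f ∈ ℂ[X_1,…,X_n]` at a family of elements of `H`
(well-defined on commuting families such as the `x_i` or the `y_i`). -/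
def evalAt {n : ℕ} (v : Fin n → H n) (f : MvPolynomial (Fin n) ℂ) : H n :=
  ∑ m ∈ f.support, MvPolynomial.coeff m f • (List.ofFn fun i => v i ^ m i).prod

end Cherednik

set_option synthInstance.maxHeartbeats 800000
namespace Cherednik

open Finset MvPolynomial

variable {n : ℕ}

/-! ### Basic relations in `H` -/

lemma hT_mul (u v : Equiv.Perm (Fin n)) : hT n u * hT n v = hT n (u * v) := by
  simpa only [hT, map_mul] using RingQuot.mkAlgHom_rel ℂ (Rel.T_mul u v)

lemma hT_one : hT n 1 = (1 : H n) := by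
  simpa only [hT, map_one] using RingQuot.mkAlgHom_rel ℂ (Rel.T_one (n := n))

lemma hx_comm (i j : Fin n) : hx n i * hx n j = hx n j * hx n i := by
  simpa only [hx, map_mul] using RingQuot.mkAlgHom_rel ℂ (Rel.x_comm i j)

lemma hy_comm (i j : Fin n) : hy n i * hy n j = hy n j * hy n i := by
  simpa only [hy, map_mul] using RingQuot.mkAlgHom_rel ℂ (Rel.y_comm i j)

lemma hT_x (w : Equiv.Perm (Fin n)) (i : Fin n) :
    hT n w * hx n i = hx n (w i) * hT n w := by
  simpa only [hT, hx, map_mul] using RingQuot.mkAlgHom_rel ℂ (Rel.w_x w i)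

lemma hT_y (w : Equiv.Perm (Fin n)) (i : Fin n) :
    hT n w * hy n i = hy n (w i) * hT n w := by
  simpa only [hT, hy, map_mul] using RingQuot.mkAlgHom_rel ℂ (Rel.w_y w i)

lemma hyx_same (i : Fin n) :
    hy n i * hx n i
      = hx n i * hy n i - ∑ j ∈ Finset.univ.filter (fun j => j ≠ i), hs n i j := by
  simpa only [hy, hx, hs, hT, fs, map_mul, map_sub, map_sum] using
    RingQuot.mkAlgHom_rel ℂ (Rel.yx_same i)

lemma hyx_ne (i j : Fin n) (h : i ≠ j) :
    hy n i * hx n j = hx n j * hy n i + hs n i j := by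
  simpa only [hy, hx, hs, hT, fs, map_mul, map_add] using
    RingQuot.mkAlgHom_rel ℂ (Rel.yx_ne i j h)

lemma hs_x (i j k : Fin n) :
    hs n i j * hx n k = hx n (Equiv.swap i j k) * hs n i j := hT_x _ _

/-! ### The commutative subalgebra generated by the `x_i` and evaluation -/

def AX (n : ℕ) : Subalgebra ℂ (H n) := Algebra.adjoin ℂ (Set.range (hx n))

noncomputable instance : CommRing (AX n) :=
  { (inferInstance : Ring (AX n)) with
    mul_comm := (Algebra.isMulCommutative_adjoin ℂ (by
      rintro a ⟨i, rfl⟩ b ⟨j, rfl⟩; exact hx_comm i j)).is_comm.comm }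

def ax (i : Fin n) : AX n := ⟨hx n i, Algebra.subset_adjoin ⟨i, rfl⟩⟩

def Ex : MvPolynomial (Fin n) ℂ →ₐ[ℂ] H n := (AX n).val.comp (aeval ax)

lemma Ex_X (k : Fin n) : Ex (X k : MvPolynomial (Fin n) ℂ) = hx n k := by
  simp [Ex, ax]

lemma evalAt_hx_eq (f : MvPolynomial (Fin n) ℂ) : evalAt (hx n) f = Ex f := by
  have hEx : Ex (n := n) f = ((aeval ax f : AX n) : H n) := rfl
  rw [hEx, aeval_def, eval₂_eq', evalAt, AddSubmonoidClass.coe_finset_sum]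
  refine Finset.sum_congr rfl fun m _ => ?_
  have h1 : (algebraMap ℂ (AX n)) (coeff m f) * ∏ i, ax i ^ m i
      = coeff m f • ∏ i, ax (n := n) i ^ m i := (Algebra.smul_def _ _).symm
  rw [h1, SetLike.val_smul]
  congr 1
  rw [← List.prod_ofFn, SubmonoidClass.coe_list_prod, List.map_ofFn]
  simp [Function.comp_def, ax]


lemma Ex_C (a : ℂ) : Ex (C a : MvPolynomial (Fin n) ℂ) = algebraMap ℂ (H n) a := by
  simp [Ex]

lemma hT_Ex (w : Equiv.Perm (Fin n)) (f : MvPolynomial (Fin n) ℂ) :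
    hT n w * Ex f = Ex (rename w f) * hT n w := by
  induction f using MvPolynomial.induction_on with
  | C a => rw [rename_C, Ex_C, Algebra.commutes]
  | add p q hp hq => rw [map_add, map_add, map_add, mul_add, add_mul, hp, hq]
  | mul_X p k hp =>
      rw [map_mul, map_mul, Ex_X, rename_X, map_mul, Ex_X, ← mul_assoc, hp,
        mul_assoc, mul_assoc, hT_x, ← mul_assoc]

lemma key (i : Fin n) (f : MvPolynomial (Fin n) ℂ) :
    ∃ c : Fin n → MvPolynomial (Fin n) ℂ,
      (∀ j, (X i - X j) * c j = rename (Equiv.swap i j) f - f) ∧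
      hy n i * Ex f = Ex f * hy n i
        + ∑ j ∈ Finset.univ.filter (fun j => j ≠ i), Ex (c j) * hs n i j := by
  induction f using MvPolynomial.induction_on with
  | C a =>
      refine ⟨0, fun j => by simp [rename_C], ?_⟩
      simp [Ex_C, Algebra.commutes]
  | add p q hp hq =>
      obtain ⟨cp, hp1, hp2⟩ := hp
      obtain ⟨cq, hq1, hq2⟩ := hq
      refine ⟨cp + cq, fun j => ?_, ?_⟩
      · rw [Pi.add_apply, mul_add, hp1 j, hq1 j, map_add]; ring
      · rw [map_add, mul_add, hp2, hq2]
        simp only [Pi.add_apply, map_add, add_mul, Finset.sum_add_distrib]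
        abel
  | mul_X p k hp =>
      obtain ⟨c, hc1, hc2⟩ := hp
      refine ⟨fun j => c j * X (Equiv.swap i j k)
        + (if k = i then -p else if j = k then p else 0), fun j => ?_, ?_⟩
      · rw [map_mul, rename_X]
        by_cases hk : k = i
        · subst hk
          simp only [Equiv.swap_apply_left, eq_self_iff_true, if_true]
          linear_combination (X (R := ℂ) j) * hc1 j
        · by_cases hjk : j = k
          · subst hjk
            simp only [Equiv.swap_apply_right, if_neg hk, eq_self_iff_true, if_true]
            linear_combination (X (R := ℂ) i) * hc1 j
          · simp only [Equiv.swap_apply_of_ne_of_ne hk (fun h => hjk h.symm),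
              if_neg hk, if_neg hjk]
            linear_combination (X (R := ℂ) k) * hc1 j
      · have main : hy n i * Ex (p * X k) = Ex p * (hy n i * hx n k)
            + ∑ j ∈ Finset.univ.filter (fun j => j ≠ i),
                Ex (c j * X (Equiv.swap i j k)) * hs n i j := by
          rw [map_mul, Ex_X, ← mul_assoc, hc2, add_mul, mul_assoc, Finset.sum_mul]
          congr 1
          refine Finset.sum_congr rfl fun j _ => ?_
          rw [mul_assoc, hs_x, ← mul_assoc, map_mul, Ex_X]
        rw [main]
        by_cases hk : k = i
        · subst hk
          rw [hyx_same]
          simp only [Equiv.swap_apply_left, eq_self_iff_true, if_true,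
            ← sub_eq_add_neg, map_sub, map_mul, Ex_X, mul_sub, Finset.mul_sum,
            sub_mul, ← mul_assoc, Finset.sum_sub_distrib]
          abel
        · rw [hyx_ne i k (fun h => hk h.symm)]
          simp only [if_neg hk, map_add, map_mul, Ex_X, mul_add, add_mul,
            ← mul_assoc, Finset.sum_add_distrib]
          have e2 : ∑ x ∈ Finset.univ.filter (fun j => j ≠ i),
              Ex (if x = k then p else 0) * hs n i x = Ex p * hs n i k := by
            rw [Finset.sum_congr rfl
              (fun x _ => by split <;> simp :
                ∀ x ∈ Finset.univ.filter (fun j => j ≠ i),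
                  Ex (if x = k then p else 0) * hs n i x
                    = if x = k then Ex p * hs n i x else 0),
              Finset.sum_ite_eq' _ k (fun x => Ex p * hs n i x)]
            exact if_pos (Finset.mem_filter.mpr ⟨Finset.mem_univ k, hk⟩)
          rw [e2]
          abel

lemma hy_Ex {f : MvPolynomial (Fin n) ℂ} (hf : f.IsSymmetric) (i : Fin n) :
    hy n i * Ex f = Ex f * hy n i := by
  obtain ⟨c, hc1, hc2⟩ := key i f
  rw [hc2, Finset.sum_eq_zero, add_zero]
  intro j hj
  have hji : j ≠ i := by simpa using hj
  have h0 : (X i - X j) * c j = 0 := by rw [hc1 j, hf, sub_self]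
  have hX : (X i - X j : MvPolynomial (Fin n) ℂ) ≠ 0 :=
    sub_ne_zero.mpr (fun h => hji (X_injective h).symm)
  rcases mul_eq_zero.mp h0 with h | h
  · exact absurd h hX
  · rw [h, map_zero, zero_mul]

lemma hx_Ex (f : MvPolynomial (Fin n) ℂ) (i : Fin n) :
    hx n i * Ex f = Ex f * hx n i := by
  rw [← Ex_X (n := n) i, ← map_mul, ← map_mul, mul_comm]

lemma hT_Ex_symm {f : MvPolynomial (Fin n) ℂ} (hf : f.IsSymmetric)
    (w : Equiv.Perm (Fin n)) : hT n w * Ex f = Ex f * hT n w := by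
  rw [hT_Ex, hf w]

lemma central_of_gen {z : H n} (hxc : ∀ i, hx n i * z = z * hx n i)
    (hyc : ∀ i, hy n i * z = z * hy n i) (hTc : ∀ w, hT n w * z = z * hT n w) :
    ∀ h : H n, z * h = h * z := by
  intro h
  obtain ⟨a, rfl⟩ := RingQuot.mkAlgHom_surjective ℂ (Rel n) h
  induction a using FreeAlgebra.induction with
  | grade0 r => rw [AlgHom.commutes, Algebra.commutes]
  | grade1 g =>
      cases g with
      | x i => exact (hxc i).symm
      | y i => exact (hyc i).symm
      | T w => exact (hTc w).symm
  | mul a b ha hb => rw [map_mul, ← mul_assoc, ha, mul_assoc, hb, mul_assoc]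
  | add a b ha hb => rw [map_add, mul_add, add_mul, ha, hb]

/-! ### The automorphism exchanging `x` and `y` -/

def sg (w : Equiv.Perm (Fin n)) : ℂ := ((Equiv.Perm.sign w : ℤ) : ℂ)

lemma sg_mul (u v : Equiv.Perm (Fin n)) : sg (u * v) = sg u * sg v := by
  simp [sg]

lemma sg_one : sg (1 : Equiv.Perm (Fin n)) = 1 := by simp [sg]

lemma sg_swap {i j : Fin n} (h : i ≠ j) : sg (Equiv.swap i j) = -1 := by
  simp [sg, Equiv.Perm.sign_swap h]

lemma sg_sq (w : Equiv.Perm (Fin n)) : sg w * sg w = 1 := by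
  have : (Equiv.Perm.sign w : ℤ) = 1 ∨ (Equiv.Perm.sign w : ℤ) = -1 :=
    Int.isUnit_iff.mp (Equiv.Perm.sign w).isUnit
  rcases this with h | h <;> simp [sg, h]

def σF : F n →ₐ[ℂ] H n :=
  FreeAlgebra.lift ℂ fun g => match g with
    | CherGen.x i => hy n i
    | CherGen.y i => hx n i
    | CherGen.T w => sg w • hT n w

lemma σF_x (i : Fin n) : σF (fx n i) = hy n i := FreeAlgebra.lift_ι_apply _ _
lemma σF_y (i : Fin n) : σF (fy n i) = hx n i := FreeAlgebra.lift_ι_apply _ _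
lemma σF_T (w : Equiv.Perm (Fin n)) : σF (fT n w) = sg w • hT n w :=
  FreeAlgebra.lift_ι_apply _ _

lemma σF_rel : ∀ ⦃a b : F n⦄, Rel n a b → σF a = σF b := by
  intro a b h
  induction h with
  | T_mul u v =>
      rw [map_mul, σF_T, σF_T, σF_T, smul_mul_smul_comm, hT_mul, ← sg_mul]
  | T_one => rw [σF_T, map_one, sg_one, hT_one, one_smul]
  | x_comm i j => rw [map_mul, map_mul, σF_x, σF_x, hy_comm]
  | y_comm i j => rw [map_mul, map_mul, σF_y, σF_y, hx_comm]
  | w_x w i =>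
      rw [map_mul, map_mul, σF_T, σF_x, σF_x, smul_mul_assoc, mul_smul_comm,
        hT_y]
  | w_y w i =>
      rw [map_mul, map_mul, σF_T, σF_y, σF_y, smul_mul_assoc, mul_smul_comm,
        hT_x]
  | yx_same i =>
      rw [map_mul, map_sub, map_mul, map_sum, σF_x, σF_y]
      have hsum : ∀ j ∈ Finset.univ.filter (fun j => j ≠ i),
          σF (fs n i j) = -hs n i j := by
        intro j hj
        have hij : i ≠ j := fun h => (by simpa using hj : j ≠ i) h.symm
        rw [fs, σF_T, sg_swap hij, hs]
        module
      rw [Finset.sum_congr rfl hsum, Finset.sum_neg_distrib, sub_neg_eq_add,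
        hyx_same i]
      abel
  | yx_ne i j hij =>
      rw [map_mul, map_add, map_mul]
      simp only [σF_x, σF_y]
      rw [show σF (fs n i j) = -hs n i j from by
        rw [fs, σF_T, sg_swap hij, hs]; module]
      have hss : hs n j i = hs n i j := by rw [hs, hs, Equiv.swap_comm]
      have h2 := hyx_ne j i (Ne.symm hij)
      rw [hss] at h2
      rw [h2]
      abel

def σH : H n →ₐ[ℂ] H n := RingQuot.liftAlgHom ℂ ⟨σF, σF_rel⟩

lemma σH_x (i : Fin n) : σH (hx n i) = hy n i := by
  rw [hx, σH, RingQuot.liftAlgHom_mkAlgHom_apply, σF_x]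

lemma σH_y (i : Fin n) : σH (hy n i) = hx n i := by
  rw [hy, σH, RingQuot.liftAlgHom_mkAlgHom_apply, σF_y]

lemma σH_T (w : Equiv.Perm (Fin n)) : σH (hT n w) = sg w • hT n w := by
  rw [hT, σH, RingQuot.liftAlgHom_mkAlgHom_apply, σF_T]
  rfl

lemma σH_σH (h : H n) : σH (σH h) = h := by
  obtain ⟨a, rfl⟩ := RingQuot.mkAlgHom_surjective ℂ (Rel n) h
  induction a using FreeAlgebra.induction with
  | grade0 r => rw [AlgHom.commutes, AlgHom.commutes, AlgHom.commutes]
  | grade1 g =>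
      cases g with
      | x i =>
          show σH (σH (hx n i)) = hx n i
          rw [σH_x, σH_y]
      | y i =>
          show σH (σH (hy n i)) = hy n i
          rw [σH_y, σH_x]
      | T w =>
          show σH (σH (hT n w)) = hT n w
          rw [σH_T, map_smul, σH_T, smul_smul, sg_sq, one_smul]
  | mul a b ha hb => simp only [map_mul, ha, hb]
  | add a b ha hb => simp only [map_add, ha, hb]

lemma σH_evalAt (f : MvPolynomial (Fin n) ℂ) :
    σH (evalAt (hx n) f) = evalAt (hy n) f := by
  rw [evalAt, evalAt, map_sum]
  refine Finset.sum_congr rfl fun m _ => ?_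
  rw [map_smul]
  congr 1
  rw [map_list_prod σH, List.map_ofFn]
  have hfun : (⇑σH ∘ fun i => hx n i ^ m i) = fun i => hy n i ^ m i := by
    funext i
    simp only [Function.comp_apply, map_pow, σH_x]
  rw [hfun]

end Cherednik

open Cherednik in
/-- For a symmetric polynomial `f`, the elements `f(x_1,…,x_n)` and `f(y_1,…,y_n)`
are central in `H`. -/
theorem statement6 (n : ℕ) (hn : 0 < n) (f : MvPolynomial (Fin n) ℂ)
    (hf : MvPolynomial.IsSymmetric f) :
    (∀ h : H n, evalAt (hx n) f * h = h * evalAt (hx n) f) ∧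
    (∀ h : H n, evalAt (hy n) f * h = h * evalAt (hy n) f) := by
  have hxc : ∀ h : H n, evalAt (hx n) f * h = h * evalAt (hx n) f := by
    rw [evalAt_hx_eq]
    exact central_of_gen (fun i => hx_Ex f i) (fun i => hy_Ex hf i)
      (fun w => hT_Ex_symm hf w)
  refine ⟨hxc, fun h => ?_⟩
  have := congrArg σH (hxc (σH h))
  rwa [map_mul, map_mul, σH_σH, σH_evalAt] at this
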